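/- For a topological space X, the following are equivalent: (1) every open cover of X has a finite subfamily whose union is dense; (2) for every infinite cardinal λ there exists a regular ultrafilter D over λ such that X is D-pseudocompact. -/

import Mathlib

open Cardinal Set

universe u v

/-- `x` is a `D`-limit point of the family of sets `O`. -/
def DLimitSets {X : Type u} {I : Type v} [TopologicalSpace X]
    (D : Ultrafilter I) (O : I → Set X) (x : X) : Prop :=
  ∀ U ∈ nhds x, {i | (U ∩ O i).Nonempty} ∈ D

/-- `X` is `D`-pseudocompact. -/
def DPseudocompact (X : Type u) {I : Type v} [TopologicalSpace X]
    (D : Ultrafilter I) : Prop :=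
  ∀ O : I → Set X, (∀ i, IsOpen (O i)) → (∀ i, (O i).Nonempty) →
    ∃ x : X, DLimitSets D O x

/-- Every open cover of cardinality at most `lam` has a finite subfamily with dense union. -/
def WeaklyInitiallyCompact (X : Type u) [TopologicalSpace X] (lam : Cardinal.{u}) : Prop :=
  ∀ 𝒰 : Set (Set X), (∀ U ∈ 𝒰, IsOpen U) → ⋃₀ 𝒰 = Set.univ →
    Cardinal.mk 𝒰 ≤ lam →
    ∃ t : Finset (Set X), ↑t ⊆ 𝒰 ∧ Dense (⋃₀ (t : Set (Set X)))

/-- A regular ultrafilter over `I` (regular of degree `|I|`): there is an `I`-indexed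
family of members of `D` every infinite subfamily of which has empty intersection. -/
def RegularUltrafilter {I : Type v} (D : Ultrafilter I) : Prop :=
  ∃ Z : I → Set I, (∀ i, Z i ∈ D) ∧
    ∀ S : Set I, S.Infinite → ⋂ i ∈ S, Z i = ∅

/-- Existence of a regular ultrafilter over `Finset J` for infinite `J`. -/
lemma exists_regular_ultrafilter (J : Type u) [Infinite J] :
    ∃ D : Ultrafilter (Finset J), RegularUltrafilter D := by
  classical
  set Z : J → Set (Finset J) := fun j => {s | j ∈ s} with hZ
  have hZinj : Function.Injective Z := by
    intro j j' h
    have : ({j'} : Finset J) ∈ Z j := by rw [h]; simp [hZ]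
    simpa [hZ, eq_comm] using this
  have hne : (Filter.generate (Set.range Z)).NeBot := by
    rw [Filter.generate_neBot_iff]
    intro t hsub hfin
    have hpre : (Z ⁻¹' t).Finite := Set.Finite.preimage hZinj.injOn hfin
    refine ⟨hpre.toFinset, ?_⟩
    intro u hu
    obtain ⟨j, rfl⟩ := hsub hu
    have : j ∈ Z ⁻¹' t := hu
    simpa [hZ] using hpre.mem_toFinset.2 this
  obtain ⟨D, hD⟩ := Ultrafilter.exists_le (Filter.generate (Set.range Z))
  have hZD : ∀ j, Z j ∈ D := fun j =>
    hD (Filter.mem_generate_of_mem ⟨j, rfl⟩)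
  refine ⟨D, fun s => {u : Finset J | s ⊆ u}, ?_, ?_⟩
  · intro s
    have : {u : Finset J | s ⊆ u} = ⋂ j ∈ (s : Set J), Z j := by
      ext u; simp [hZ, Finset.subset_iff]
    show {u : Finset J | s ⊆ u} ∈ D
    rw [this]
    exact (Filter.biInter_mem s.finite_toSet).2 fun j _ => hZD j
  · intro S hS
    by_contra h
    obtain ⟨u, hu⟩ := Set.nonempty_iff_ne_empty.2 h
    simp only [Set.mem_iInter, Set.mem_setOf_eq] at hu
    exact hS (Set.Finite.subset u.powerset.finite_toSet
      (fun s hs => by simpa using (hu s hs : s ⊆ u)))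

/-- The cover property implies `D`-pseudocompactness for every ultrafilter over a
nonempty index type. -/
lemma dPseudocompact_of_cover {X : Type u} [TopologicalSpace X] {I : Type v} [Nonempty I]
    (H : ∀ 𝒰 : Set (Set X), (∀ U ∈ 𝒰, IsOpen U) → ⋃₀ 𝒰 = Set.univ →
        ∃ t : Finset (Set X), ↑t ⊆ 𝒰 ∧ Dense (⋃₀ (t : Set (Set X))))
    (D : Ultrafilter I) : DPseudocompact X D := by
  classical
  intro O hOopen hOne
  by_contra hno
  push_neg at hno
  simp only [DLimitSets, not_forall] at hno
  -- for every x pick an open neighborhood failing the limit condition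
  have hV : ∀ x : X, ∃ V : Set X, IsOpen V ∧ x ∈ V ∧ {i | (V ∩ O i).Nonempty} ∉ D := by
    intro x
    obtain ⟨U, hU, hUD⟩ := hno x
    obtain ⟨V, hVU, hVopen, hxV⟩ := mem_nhds_iff.1 hU
    exact ⟨V, hVopen, hxV, fun hmem => hUD (D.mem_of_superset hmem
      (fun i hi => hi.mono (Set.inter_subset_inter_left _ hVU)))⟩
  choose V hVopen hxV hVD using hV
  obtain ⟨t, htsub, htdense⟩ := H (Set.range V) (by rintro U ⟨x, rfl⟩; exact hVopen x)
    (Set.eq_univ_of_forall fun x => ⟨V x, ⟨x, rfl⟩, hxV x⟩)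
  have hA : (⋂ u ∈ t, {i | (u ∩ O i).Nonempty}ᶜ) ∈ D := by
    refine (Filter.biInter_mem t.finite_toSet).2 fun u hu => ?_
    obtain ⟨x, rfl⟩ := htsub hu
    exact (Ultrafilter.compl_mem_iff_notMem).2 (hVD x)
  obtain ⟨i, hi⟩ := Ultrafilter.nonempty_of_mem hA
  simp only [Set.mem_iInter, Set.mem_compl_iff, Set.mem_setOf_eq] at hi
  obtain ⟨y, hy1, u, hu, hy2⟩ := htdense.inter_open_nonempty _ (hOopen i) (hOne i)
  exact hi u hu ⟨y, hy2, hy1⟩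

theorem hi_iff_regular_dPseudocompact
    {X : Type u} [TopologicalSpace X] :
    (∀ 𝒰 : Set (Set X), (∀ U ∈ 𝒰, IsOpen U) → ⋃₀ 𝒰 = Set.univ →
        ∃ t : Finset (Set X), ↑t ⊆ 𝒰 ∧ Dense (⋃₀ (t : Set (Set X)))) ↔
      (∀ lam : Cardinal.{u}, Cardinal.aleph0 ≤ lam →
        ∃ (I : Type u) (D : Ultrafilter I), Cardinal.mk I = lam ∧
          RegularUltrafilter D ∧ DPseudocompact X D) := by
  classical
  constructor
  · intro H lam hlam
    have : Infinite lam.out := Cardinal.infinite_iff.2 (by rwa [Cardinal.mk_out])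
    obtain ⟨D, hD⟩ := exists_regular_ultrafilter lam.out
    exact ⟨Finset lam.out, D, by rw [Cardinal.mk_finset_of_infinite, Cardinal.mk_out],
      hD, dPseudocompact_of_cover H D⟩
  · intro H 𝒰 hopen hcover
    by_cases h𝒰 : 𝒰 = ∅
    · refine ⟨∅, by simp, ?_⟩
      have : IsEmpty X := by
        subst h𝒰
        simp at hcover
        exact Set.univ_eq_empty_iff.1 hcover.symm
      exact fun x => (this.false x).elim
    · -- 𝒰 nonempty
      have hne : Nonempty 𝒰 := Set.nonempty_coe_sort.2 (Set.nonempty_iff_ne_empty.2 h𝒰)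
      set lam := max (Cardinal.mk 𝒰) Cardinal.aleph0 with hlam
      obtain ⟨I, D, hmkI, ⟨Z, hZD, hZreg⟩, hps⟩ := H lam (le_max_right _ _)
      -- surjection f : I → 𝒰
      have hle : Cardinal.mk 𝒰 ≤ Cardinal.mk I := hmkI ▸ le_max_left _ _
      obtain ⟨g⟩ := Cardinal.le_def _ _ |>.1 hle
      have hfsurj : Function.Surjective (Function.invFun g) :=
        Function.invFun_surjective g.injective
      set f : I → 𝒰 := Function.invFun g with hf
      by_contra hnot
      push_neg at hnot
      -- each index lies in only finitely many Z j
      have hGfin : ∀ i : I, {j | i ∈ Z j}.Finite := by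
        intro i
        by_contra hinf
        have := hZreg _ hinf
        have : i ∈ (∅ : Set I) := this ▸ Set.mem_iInter₂.2 fun j hj => hj
        exact this
      -- finite subfamily attached to i
      set t : I → Finset (Set X) := fun i =>
        (hGfin i).toFinset.image (fun j => (f j : Set X)) with ht
      have htsub : ∀ i, ↑(t i) ⊆ 𝒰 := by
        intro i u hu
        simp only [ht, Finset.coe_image, Set.mem_image] at hu
        obtain ⟨j, _, rfl⟩ := hu
        exact (f j).2
      set O : I → Set X := fun i => (closure (⋃₀ ↑(t i)))ᶜ with hO
      have hOopen : ∀ i, IsOpen (O i) := fun i => isClosed_closure.isOpen_compl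
      have hOne : ∀ i, (O i).Nonempty := by
        intro i
        rw [hO]
        by_contra hcon
        have hcl : closure (⋃₀ ((t i : Set (Set X)))) = Set.univ := by
          rw [← Set.compl_empty_iff]
          exact Set.not_nonempty_iff_eq_empty.1 hcon
        exact hnot (t i) (htsub i) (dense_iff_closure_eq.2 hcl)
      obtain ⟨x, hx⟩ := hps O hOopen hOne
      obtain ⟨U, hU𝒰, hxU⟩ : ∃ U ∈ 𝒰, x ∈ U := by
        have := Set.eq_univ_iff_forall.1 hcover x
        simpa [Set.mem_sUnion] using this
      obtain ⟨j₀, hj₀⟩ := hfsurj ⟨U, hU𝒰⟩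
      have hmem : {i | (U ∩ O i).Nonempty} ∩ Z j₀ ∈ D :=
        Filter.inter_mem (hx U ((hopen U hU𝒰).mem_nhds hxU)) (hZD j₀)
      obtain ⟨i, hi1, hi2⟩ := Ultrafilter.nonempty_of_mem hmem
      -- U ∈ t i
      have hUt : U ∈ t i := by
        simp only [ht, Finset.mem_image]
        exact ⟨j₀, (hGfin i).mem_toFinset.2 hi2, by rw [hj₀]⟩
      obtain ⟨y, hyU, hyO⟩ := hi1
      exact hyO (subset_closure ⟨U, hUt, hyU⟩)
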